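/- Under the same setting, for any symmetric profile x (constant x_i ∈ X_i on each Θ_i), the L²-distance from x to the set of measurable selections of θ ↦ X_θ is at most max_i d_i, where d_i = sup_{θ∈Θ_i} d_H(X_θ, X_i). -/

import Mathlib

open Metric MeasureTheory
open Set

section helpers
variable {α β : Type*} [MeasurableSpace α] [MeasurableSpace β]

lemma measurable_cons {n : ℕ} {f : α → ℝ} {g : α → (Fin n → ℝ)}
    (hf : Measurable f) (hg : Measurable g) :
    Measurable (fun a => Fin.cons (f a) (g a) : α → Fin (n+1) → ℝ) := by
  rw [measurable_pi_iff]
  intro j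
  refine Fin.cases ?_ ?_ j
  · simpa using hf
  · intro i
    simpa [Function.comp_def] using (measurable_pi_apply i).comp hg

lemma cons_smul_comb {n : ℕ} (q : ℝ) (x y : Fin n → ℝ) {a b : ℝ} (hab : a + b = 1) :
    Fin.cons q (a • x + b • y) = a • (Fin.cons q x : Fin (n+1) → ℝ) + b • (Fin.cons q y : Fin (n+1) → ℝ) := by
  funext j
  refine Fin.cases ?_ ?_ j
  · simp only [Fin.cons_zero, Pi.add_apply, Pi.smul_apply, smul_eq_mul]
    rw [← add_mul, hab, one_mul]
  · intro i
    simp [Fin.cons_succ]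

end helpers

section uniquegraph

open Classical in
/-- From a measurable subset of `ℝ × ℝ` whose sections are subsingletons, one can define a
measurable function choosing the unique element where it exists. -/
lemma exists_measurable_of_unique_graph (G : Set (ℝ × ℝ)) (hG : MeasurableSet G)
    (huniq : ∀ θ t s, (θ, t) ∈ G → (θ, s) ∈ G → t = s) :
    ∃ c : ℝ → ℝ, Measurable c ∧ ∀ θ, (∃ t, (θ, t) ∈ G) → (θ, c θ) ∈ G := by
  classical
  refine ⟨fun θ => if h : ∃ t, (θ, t) ∈ G then h.choose else 0, ?_, ?_⟩
  · have hinj : Set.InjOn Prod.fst G := by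
      rintro ⟨θ, t⟩ ht ⟨θ', s⟩ hs (h : θ = θ')
      subst h
      exact Prod.ext rfl (huniq θ t s ht hs)
    intro A hA
    have hdom : MeasurableSet (Prod.fst '' G) :=
      hG.image_of_continuousOn_injOn continuous_fst.continuousOn hinj
    have himg : MeasurableSet (Prod.fst '' (G ∩ (Set.univ ×ˢ A))) :=
      (hG.inter (MeasurableSet.univ.prod hA)).image_of_continuousOn_injOn
        continuous_fst.continuousOn (hinj.mono Set.inter_subset_left)
    have heq : (fun θ => if h : ∃ t, (θ, t) ∈ G then h.choose else 0) ⁻¹' A =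
        (Prod.fst '' (G ∩ (Set.univ ×ˢ A))) ∪ ((Prod.fst '' G)ᶜ ∩ {_θ : ℝ | (0:ℝ) ∈ A}) := by
      ext θ
      simp only [Set.mem_preimage, Set.mem_union, Set.mem_inter_iff, Set.mem_compl_iff,
        Set.mem_image, Set.mem_setOf_eq, Set.mem_prod, Set.mem_univ, true_and, Prod.exists]
      by_cases h : ∃ t, (θ, t) ∈ G
      · rw [dif_pos h]
        constructor
        · intro hc
          exact Or.inl ⟨θ, h.choose, ⟨h.choose_spec, hc⟩, rfl⟩
        · rintro (⟨θ', t, ⟨htG, htA⟩, rfl⟩ | ⟨hnd, h0⟩)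
          · rwa [huniq θ' h.choose t h.choose_spec htG]
          · exact absurd ⟨θ, h.choose, h.choose_spec, rfl⟩ hnd
      · rw [dif_neg h]
        constructor
        · intro h0
          refine Or.inr ⟨?_, h0⟩
          rintro ⟨θ', t, htG, rfl⟩
          exact h ⟨t, htG⟩
        · rintro (⟨θ', t, ⟨htG, _⟩, rfl⟩ | ⟨_, h0⟩)
          · exact absurd ⟨t, htG⟩ h
          · exact h0
    rw [heq]
    refine himg.union (hdom.compl.inter ?_)
    by_cases h0 : (0:ℝ) ∈ A
    · simpa [h0] using MeasurableSet.univ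
    · simpa [h0] using MeasurableSet.empty
  · intro θ h
    simp only [dif_pos h]
    exact h.choose_spec

end uniquegraph

/-- Borel selection theorem for correspondences `ℝ → ℝⁿ` with measurable graph and
convex compact (possibly empty) values. -/
theorem convex_graph_selection (n : ℕ) :
    ∀ B : Set (ℝ × (Fin n → ℝ)), MeasurableSet B →
    (∀ θ, Convex ℝ {x | (θ, x) ∈ B}) →
    (∀ θ, IsCompact {x | (θ, x) ∈ B}) →
    MeasurableSet {θ | ∃ x, (θ, x) ∈ B} ∧
      ∃ σ : ℝ → (Fin n → ℝ), Measurable σ ∧ ∀ θ, (∃ x, (θ, x) ∈ B) → (θ, σ θ) ∈ B := by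
  induction n with
  | zero =>
    intro B hB _ _
    have hdom : {θ | ∃ x, (θ, x) ∈ B} = (fun θ : ℝ => (θ, (default : Fin 0 → ℝ))) ⁻¹' B := by
      ext θ
      constructor
      · rintro ⟨x, hx⟩
        simpa [Subsingleton.elim (default : Fin 0 → ℝ) x] using hx
      · intro h
        exact ⟨default, h⟩
    constructor
    · rw [hdom]
      exact (measurable_id.prodMk measurable_const) hB
    · refine ⟨fun _ => default, measurable_const, ?_⟩
      rintro θ ⟨x, hx⟩
      simpa [Subsingleton.elim (default : Fin 0 → ℝ) x] using hx
  | succ n ih =>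
    intro B hB hconv hcomp
    classical
    -- the rational hyperplane slices
    set Bq : ℚ → Set (ℝ × (Fin n → ℝ)) :=
      fun q => (fun p : ℝ × (Fin n → ℝ) => (p.1, Fin.cons (q : ℝ) p.2)) ⁻¹' B with hBq_def
    have hmq : ∀ q : ℚ, Measurable
        (fun p : ℝ × (Fin n → ℝ) => (p.1, (Fin.cons (q : ℝ) p.2 : Fin (n+1) → ℝ))) := fun q =>
      measurable_fst.prodMk (measurable_cons (f := fun _ => (q:ℝ)) (g := Prod.snd) measurable_const measurable_snd)
    have hBqmeas : ∀ q, MeasurableSet (Bq q) := fun q => (hmq q) hB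
    -- sections of the slices
    have hBqsec : ∀ (q : ℚ) (θ : ℝ),
        {x' | (θ, x') ∈ Bq q} = Fin.tail '' ({x | (θ, x) ∈ B} ∩ {x | x 0 = (q : ℝ)}) := by
      intro q θ
      ext x'
      constructor
      · intro hx'
        exact ⟨Fin.cons (q : ℝ) x', ⟨hx', by simp⟩, by simp [Fin.tail_cons]⟩
      · rintro ⟨x, ⟨hxB, hx0⟩, rfl⟩
        have : Fin.cons ((q : ℝ)) (Fin.tail x) = x := by
          rw [← hx0]; exact Fin.cons_self_tail x
        show (θ, Fin.cons ((q:ℝ)) (Fin.tail x)) ∈ B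
        rw [this]; exact hxB
    have hBqconv : ∀ (q : ℚ) (θ : ℝ), Convex ℝ {x' | (θ, x') ∈ Bq q} := by
      intro q θ x' hx' y' hy' a b ha hb hab
      show (θ, Fin.cons ((q:ℝ)) (a • x' + b • y')) ∈ B
      rw [cons_smul_comb (q:ℝ) x' y' hab]
      exact hconv θ hx' hy' ha hb hab
    have htail_cont : Continuous (Fin.tail : (Fin (n+1) → ℝ) → (Fin n → ℝ)) :=
      continuous_pi fun i => continuous_apply i.succ
    have hBqcomp : ∀ (q : ℚ) (θ : ℝ), IsCompact {x' | (θ, x') ∈ Bq q} := by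
      intro q θ
      rw [hBqsec q θ]
      exact (((hcomp θ).inter_right
        (isClosed_eq (continuous_apply 0) continuous_const))).image htail_cont
    -- apply the induction hypothesis to the slices
    have H := fun q : ℚ => ih (Bq q) (hBqmeas q) (hBqconv q) (hBqcomp q)
    have hUq : ∀ q, MeasurableSet {θ | ∃ x', (θ, x') ∈ Bq q} := fun q => (H q).1
    choose σq hσqm hσqsel using fun q => (H q).2
    set U : Set ℝ := ⋃ q : ℚ, {θ | ∃ x', (θ, x') ∈ Bq q} with hU_def
    have hUmeas : MeasurableSet U := MeasurableSet.iUnion fun q => hUq q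
    -- off `U`, the head coordinate is constant on each section
    have headconst : ∀ θ, θ ∉ U → ∀ x, (θ, x) ∈ B → ∀ y, (θ, y) ∈ B → x 0 = y 0 := by
      intro θ hθ x hx y hy
      by_contra hne
      have key : ∀ u w : Fin (n+1) → ℝ, (θ, u) ∈ B → (θ, w) ∈ B → u 0 < w 0 → False := by
        intro u w hu hw hlt
        obtain ⟨q, hq1, hq2⟩ := exists_rat_btwn hlt
        have hden : (0:ℝ) < w 0 - u 0 := sub_pos.2 hlt
        set t : ℝ := ((q : ℝ) - u 0) / (w 0 - u 0) with ht_def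
        have ht0 : 0 ≤ t := div_nonneg (by linarith) hden.le
        have ht1 : t ≤ 1 := by
          rw [div_le_one hden]; linarith
        have hz : (θ, (1 - t) • u + t • w) ∈ B :=
          hconv θ hu hw (by linarith) ht0 (by ring)
        have hz0 : ((1 - t) • u + t • w) 0 = (q : ℝ) := by
          have : t * (w 0 - u 0) = (q : ℝ) - u 0 := div_mul_cancel₀ _ hden.ne'
          simp only [Pi.add_apply, Pi.smul_apply, smul_eq_mul]
          nlinarith [this]
        apply hθ
        rw [hU_def]
        refine Set.mem_iUnion.2 ⟨q, Fin.tail ((1 - t) • u + t • w), ?_⟩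
        show (θ, Fin.cons ((q:ℝ)) (Fin.tail ((1 - t) • u + t • w))) ∈ B
        have : Fin.cons ((q:ℝ)) (Fin.tail ((1 - t) • u + t • w)) = (1 - t) • u + t • w := by
          rw [← hz0]; exact Fin.cons_self_tail _
        rw [this]; exact hz
      rcases lt_or_gt_of_ne hne with h | h
      · exact key x y hx hy h
      · exact key y x hy hx h
    -- the degenerate part
    set W : Set (ℝ × (Fin (n+1) → ℝ)) := B ∩ (Prod.fst ⁻¹' Uᶜ) with hW_def
    have hWmeas : MeasurableSet W := hB.inter (measurable_fst hUmeas.compl)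
    set tmap : ℝ × (Fin (n+1) → ℝ) → ℝ × (Fin n → ℝ) := fun p => (p.1, Fin.tail p.2) with htmap_def
    have htmap_cont : Continuous tmap := continuous_fst.prodMk (htail_cont.comp continuous_snd)
    have htmap_inj : Set.InjOn tmap W := by
      rintro ⟨θ, x⟩ hx ⟨θ', y⟩ hy heq
      have h1 : θ = θ' := congrArg Prod.fst heq
      subst h1
      have h2 : Fin.tail x = Fin.tail y := congrArg Prod.snd heq
      have hxB : (θ, x) ∈ B := hx.1
      have hyB : (θ, y) ∈ B := hy.1
      have hθU : θ ∉ U := hx.2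
      have h0 : x 0 = y 0 := headconst θ hθU x hxB y hyB
      have : x = y := by
        rw [← Fin.cons_self_tail x, ← Fin.cons_self_tail y, h0, h2]
      rw [this]
    set W' : Set (ℝ × (Fin n → ℝ)) := tmap '' W with hW'_def
    have hW'meas : MeasurableSet W' :=
      hWmeas.image_of_continuousOn_injOn htmap_cont.continuousOn htmap_inj
    have hW'sec : ∀ θ, {x' | (θ, x') ∈ W'} = Fin.tail '' {x | (θ, x) ∈ W} := by
      intro θ
      ext x'
      constructor
      · rintro ⟨⟨θ₀, x⟩, hxW, heq⟩
        have hθ : θ₀ = θ := congrArg Prod.fst heq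
        subst hθ
        exact ⟨x, hxW, congrArg Prod.snd heq⟩
      · rintro ⟨x, hxW, rfl⟩
        exact ⟨(θ, x), hxW, rfl⟩
    have hWsec : ∀ θ, {x | (θ, x) ∈ W} = if θ ∈ U then (∅ : Set (Fin (n+1) → ℝ)) else {x | (θ, x) ∈ B} := by
      intro θ
      by_cases hθ : θ ∈ U <;> ext x <;> simp [hW_def, hθ]
    have hW'conv : ∀ θ, Convex ℝ {x' | (θ, x') ∈ W'} := by
      intro θ
      rw [hW'sec θ]
      have hWconv : Convex ℝ {x | (θ, x) ∈ W} := by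
        rw [hWsec θ]
        by_cases hθ : θ ∈ U
        · simp only [hθ, if_true]; exact convex_empty
        · simp only [hθ, if_false]; exact hconv θ
      have := hWconv.linear_image (LinearMap.funLeft ℝ ℝ Fin.succ)
      exact this
    have hW'comp : ∀ θ, IsCompact {x' | (θ, x') ∈ W'} := by
      intro θ
      rw [hW'sec θ]
      refine IsCompact.image ?_ htail_cont
      rw [hWsec θ]
      by_cases hθ : θ ∈ U
      · simp only [hθ, if_true]; exact isCompact_empty
      · simp only [hθ, if_false]; exact hcomp θ
    obtain ⟨hdomW', σ', hσ'm, hσ'sel⟩ := ih W' hW'meas hW'conv hW'comp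
    -- recover the head coordinate on the degenerate part
    set Gc : Set (ℝ × ℝ) :=
      (fun p : ℝ × ℝ => (p.1, (Fin.cons p.2 (σ' p.1) : Fin (n+1) → ℝ))) ⁻¹' W with hGc_def
    have hGcmeas : MeasurableSet Gc := by
      refine ?_
      exact (measurable_fst.prodMk (measurable_cons (f := Prod.snd) (g := fun p => σ' p.1) measurable_snd (hσ'm.comp measurable_fst))) hWmeas
    have hGcuniq : ∀ θ t s, (θ, t) ∈ Gc → (θ, s) ∈ Gc → t = s := by
      intro θ t s ht hs
      have htW : (θ, (Fin.cons t (σ' θ) : Fin (n+1) → ℝ)) ∈ W := ht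
      have hsW : (θ, (Fin.cons s (σ' θ) : Fin (n+1) → ℝ)) ∈ W := hs
      have hθU : θ ∉ U := htW.2
      have := headconst θ hθU _ htW.1 _ hsW.1
      simpa using this
    obtain ⟨c, hcm, hcsel⟩ := exists_measurable_of_unique_graph Gc hGcmeas hGcuniq
    -- domain computation
    have hdomW'eq : {θ | ∃ x', (θ, x') ∈ W'} = {θ | ∃ x, (θ, x) ∈ B} ∩ Uᶜ := by
      ext θ
      constructor
      · rintro ⟨x', hx'⟩
        have hx'' : x' ∈ {y | (θ, y) ∈ W'} := hx'
        rw [hW'sec θ] at hx''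
        obtain ⟨x, hxW, -⟩ := hx''
        exact ⟨⟨x, hxW.1⟩, hxW.2⟩
      · rintro ⟨⟨x, hx⟩, hθU⟩
        exact ⟨Fin.tail x, ⟨(θ, x), ⟨hx, hθU⟩, rfl⟩⟩
    have hdomeq : {θ | ∃ x, (θ, x) ∈ B} = U ∪ {θ | ∃ x', (θ, x') ∈ W'} := by
      ext θ
      constructor
      · rintro ⟨x, hx⟩
        by_cases hθ : θ ∈ U
        · exact Or.inl hθ
        · exact Or.inr (by rw [hdomW'eq]; exact ⟨⟨x, hx⟩, hθ⟩)
      · rintro (hθ | hθ)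
        · obtain ⟨q, hq⟩ := Set.mem_iUnion.1 hθ
          obtain ⟨x', hx'⟩ := hq
          exact ⟨Fin.cons ((q:ℝ)) x', hx'⟩
        · rw [hdomW'eq] at hθ
          exact hθ.1
    have hdommeas : MeasurableSet {θ | ∃ x, (θ, x) ∈ B} := by
      rw [hdomeq]; exact hUmeas.union hdomW'
    refine ⟨hdommeas, ?_⟩
    -- build the selection
    obtain ⟨e, he⟩ := exists_surjective_nat ℚ
    set pP : ℕ → ℝ → Prop := fun k θ => θ ∈ {θ | ∃ x', (θ, x') ∈ Bq (e k)} ∨ θ ∉ U with hpP_def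
    have htot : ∀ θ, ∃ k, pP k θ := by
      intro θ
      by_cases hθ : θ ∈ U
      · obtain ⟨q, hq⟩ := Set.mem_iUnion.1 hθ
        obtain ⟨k, rfl⟩ := he q
        exact ⟨k, Or.inl hq⟩
      · exact ⟨0, Or.inr hθ⟩
    have hpPmeas : ∀ k, MeasurableSet {θ | pP k θ} := by
      intro k
      exact (hUq (e k)).union hUmeas.compl
    set fK : ℕ → ℝ → (Fin (n+1) → ℝ) :=
      fun k θ => Fin.cons ((e k : ℝ)) (σq (e k) θ) with hfK_def
    have hfKm : ∀ k, Measurable (fK k) := fun k =>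
      measurable_cons (f := fun _ => ((e k : ℚ) : ℝ)) (g := σq (e k)) measurable_const (hσqm (e k))
    have hf1m : Measurable (fun θ => fK (Nat.find (htot θ)) θ) :=
      Measurable.find hfKm hpPmeas htot
    set f2 : ℝ → (Fin (n+1) → ℝ) := fun θ => Fin.cons (c θ) (σ' θ) with hf2_def
    have hf2m : Measurable f2 := measurable_cons hcm hσ'm
    refine ⟨U.piecewise (fun θ => fK (Nat.find (htot θ)) θ) f2,
      Measurable.piecewise hUmeas hf1m hf2m, ?_⟩
    rintro θ ⟨x, hx⟩
    by_cases hθ : θ ∈ U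
    · rw [Set.piecewise_eq_of_mem _ _ _ hθ]
      have hspec := Nat.find_spec (htot θ)
      rcases hspec with hmem | hnot
      · exact hσqsel (e (Nat.find (htot θ))) θ hmem
      · exact absurd hθ hnot
    · rw [Set.piecewise_eq_of_notMem _ _ _ hθ]
      have hθdom : θ ∈ {θ | ∃ x', (θ, x') ∈ W'} := by
        rw [hdomW'eq]; exact ⟨⟨x, hx⟩, hθ⟩
      have hsel' := hσ'sel θ hθdom
      have : σ' θ ∈ {x' | (θ, x') ∈ W'} := hsel'
      rw [hW'sec θ] at this
      obtain ⟨xw, hxwW, hxwtail⟩ := this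
      have hGcne : ∃ t, (θ, t) ∈ Gc := by
        refine ⟨xw 0, ?_⟩
        show (θ, (Fin.cons (xw 0) (σ' θ) : Fin (n+1) → ℝ)) ∈ W
        rw [← hxwtail, Fin.cons_self_tail]
        exact hxwW
      have := hcsel θ hGcne
      exact this.1




/-- Lebesgue measure restricted to the player set `Θ = [0,1]`. -/
noncomputable def μ01 : Measure ℝ := volume.restrict (Set.Icc 0 1)

/-- Lemma `lm:FY` i: a symmetric profile (constant equal to `v i ∈ X_i` on
each `Θ_i`) is at `L²`-distance at most `max_i d_i` from the set of measurable selections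
of `θ ↦ 𝒳 θ`, where `d_i ≥ sup_{θ∈Θ_i} d_H(𝒳 θ, X_i)`. -/
theorem symmetric_profile_close_to_feasible {T I : ℕ} {R : ℝ}
    (𝒳 : ℝ → Set (EuclideanSpace ℝ (Fin T)))
    (Θp : Fin I → Set ℝ) (ι : ℝ → Fin I)
    (Xi : Fin I → Set (EuclideanSpace ℝ (Fin T)))
    (d : Fin I → ℝ) (D : ℝ)
    (hΘmeas : ∀ i, MeasurableSet (Θp i))
    (hΘdisj : ∀ i j, i ≠ j → Disjoint (Θp i) (Θp j))
    (hΘcover : (⋃ i, Θp i) = Set.Icc (0:ℝ) 1)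
    (hμpos : ∀ i, 0 < (volume (Θp i)).toReal)
    (hι : ∀ i, ∀ θ ∈ Θp i, ι θ = i) (hιmeas : Measurable ι)
    (hgraph : MeasurableSet
      {p : ℝ × EuclideanSpace ℝ (Fin T) | p.1 ∈ Set.Icc (0:ℝ) 1 ∧ p.2 ∈ 𝒳 p.1})
    (hXne : ∀ θ ∈ Set.Icc (0:ℝ) 1, (𝒳 θ).Nonempty)
    (hXconv : ∀ θ ∈ Set.Icc (0:ℝ) 1, Convex ℝ (𝒳 θ))
    (hXcomp : ∀ θ ∈ Set.Icc (0:ℝ) 1, IsCompact (𝒳 θ))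
    (hXbd : ∀ θ ∈ Set.Icc (0:ℝ) 1, 𝒳 θ ⊆ Metric.closedBall 0 R)
    (hXine : ∀ i, (Xi i).Nonempty) (hXiconv : ∀ i, Convex ℝ (Xi i))
    (hXicomp : ∀ i, IsCompact (Xi i))
    (hH : ∀ i, ∀ θ ∈ Θp i, Metric.hausdorffDist (𝒳 θ) (Xi i) ≤ d i)
    (hD : ∀ i, d i ≤ D)
    (v : Fin I → EuclideanSpace ℝ (Fin T)) (hv : ∀ i, v i ∈ Xi i) :
    ∃ y : ℝ → EuclideanSpace ℝ (Fin T), Measurable y ∧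
      (∀ θ ∈ Set.Icc (0:ℝ) 1, y θ ∈ 𝒳 θ) ∧
      (∫ θ, ‖v (ι θ) - y θ‖ ^ 2 ∂μ01) ≤ D ^ 2 := by
  classical
  set φ : EuclideanSpace ℝ (Fin T) ≃L[ℝ] (Fin T → ℝ) :=
    PiLp.continuousLinearEquiv 2 ℝ (fun _ : Fin T => ℝ) with hφ_def
  -- `D` is nonnegative
  have h0mem : (0:ℝ) ∈ Set.Icc (0:ℝ) 1 := by norm_num
  have h0mem' : (0:ℝ) ∈ ⋃ i, Θp i := by rw [hΘcover]; exact h0mem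
  obtain ⟨i₀, hi₀⟩ := Set.mem_iUnion.1 h0mem'
  have hD0 : 0 ≤ D := le_trans (le_trans Metric.hausdorffDist_nonneg (hH i₀ 0 hi₀)) (hD i₀)
  -- the restricted graph
  set Bstar : Set (ℝ × EuclideanSpace ℝ (Fin T)) :=
    {p | p.1 ∈ Set.Icc (0:ℝ) 1 ∧ p.2 ∈ 𝒳 p.1} ∩
      {p | dist p.2 (v (ι p.1)) ≤ d (ι p.1)} with hBstar_def
  have hvmeas : Measurable (fun p : ℝ × EuclideanSpace ℝ (Fin T) => v (ι p.1)) :=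
    (measurable_of_countable v).comp (hιmeas.comp measurable_fst)
  have hBstarmeas : MeasurableSet Bstar := by
    refine hgraph.inter ?_
    exact measurableSet_le (measurable_snd.dist hvmeas)
      ((measurable_of_countable d).comp (hιmeas.comp measurable_fst))
  -- transfer to `Fin T → ℝ`
  set ψ : ℝ × (Fin T → ℝ) → ℝ × EuclideanSpace ℝ (Fin T) :=
    fun p => (p.1, φ.symm p.2) with hψ_def
  have hψmeas : Measurable ψ :=
    measurable_fst.prodMk (φ.symm.continuous.measurable.comp measurable_snd)
  set Bt : Set (ℝ × (Fin T → ℝ)) := ψ ⁻¹' Bstar with hBt_def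
  have hBtmeas : MeasurableSet Bt := hψmeas hBstarmeas
  have himg : ∀ S : Set (EuclideanSpace ℝ (Fin T)), ⇑φ.symm ⁻¹' S = ⇑φ '' S := fun S =>
    (congrFun (Set.image_eq_preimage_of_inverse φ.symm_apply_apply φ.apply_symm_apply) S).symm
  have hsece : ∀ θ : ℝ, {z | (θ, z) ∈ Bt} = ⇑φ '' {x | (θ, x) ∈ Bstar} := by
    intro θ
    rw [← himg]
    rfl
  have hsecstar : ∀ θ ∈ Set.Icc (0:ℝ) 1,
      {x | (θ, x) ∈ Bstar} = 𝒳 θ ∩ Metric.closedBall (v (ι θ)) (d (ι θ)) := by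
    intro θ hθ
    ext x
    simp only [hBstar_def, Set.mem_inter_iff, Set.mem_setOf_eq, Metric.mem_closedBall]
    exact ⟨fun h => ⟨h.1.2, h.2⟩, fun h => ⟨⟨hθ, h.1⟩, h.2⟩⟩
  have hsecstar' : ∀ θ ∉ Set.Icc (0:ℝ) 1, {x | (θ, x) ∈ Bstar} = (∅ : Set (EuclideanSpace ℝ (Fin T))) := by
    intro θ hθ
    ext x
    simp only [hBstar_def, Set.mem_inter_iff, Set.mem_setOf_eq, Set.mem_empty_iff_false,
      iff_false, not_and]
    exact fun h => absurd h.1 hθ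
  have hstarconv : ∀ θ, Convex ℝ {x | (θ, x) ∈ Bstar} := by
    intro θ
    by_cases hθ : θ ∈ Set.Icc (0:ℝ) 1
    · rw [hsecstar θ hθ]
      exact (hXconv θ hθ).inter (convex_closedBall _ _)
    · rw [hsecstar' θ hθ]
      exact convex_empty
  have hstarcomp : ∀ θ, IsCompact {x | (θ, x) ∈ Bstar} := by
    intro θ
    by_cases hθ : θ ∈ Set.Icc (0:ℝ) 1
    · rw [hsecstar θ hθ]
      exact (hXcomp θ hθ).inter_right Metric.isClosed_closedBall
    · rw [hsecstar' θ hθ]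
      exact isCompact_empty
  have hBtconv : ∀ θ, Convex ℝ {z | (θ, z) ∈ Bt} := by
    intro θ
    rw [hsece θ]
    have := (hstarconv θ).linear_image (φ.toLinearEquiv.toLinearMap)
    simpa using this
  have hBtcomp : ∀ θ, IsCompact {z | (θ, z) ∈ Bt} := by
    intro θ
    rw [hsece θ]
    exact (hstarcomp θ).image φ.continuous
  obtain ⟨-, σ, hσm, hσsel⟩ := convex_graph_selection T Bt hBtmeas hBtconv hBtcomp
  refine ⟨fun θ => φ.symm (σ θ), φ.symm.continuous.measurable.comp hσm, ?_⟩
  -- nonemptiness of the sections of `Bt` over `[0,1]`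
  have hne : ∀ θ ∈ Set.Icc (0:ℝ) 1, ∃ z, (θ, z) ∈ Bt := by
    intro θ hθ
    have hθ' : θ ∈ ⋃ i, Θp i := by rw [hΘcover]; exact hθ
    obtain ⟨i, hi⟩ := Set.mem_iUnion.1 hθ'
    have hιθ : ι θ = i := hι i θ hi
    obtain ⟨p, hp, hpd⟩ := (hXcomp θ hθ).exists_infDist_eq_dist (hXne θ hθ) (v i)
    have hedist : EMetric.hausdorffEdist (Xi i) (𝒳 θ) ≠ ⊤ :=
      hausdorffEdist_ne_top_of_nonempty_of_bounded (hXine i) (hXne θ hθ)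
        (hXicomp i).isBounded (hXcomp θ hθ).isBounded
    have h1 : infDist (v i) (𝒳 θ) ≤ hausdorffDist (Xi i) (𝒳 θ) :=
      infDist_le_hausdorffDist_of_mem (hv i) hedist
    have hdist : dist p (v i) ≤ d i := by
      rw [dist_comm, ← hpd]
      calc infDist (v i) (𝒳 θ) ≤ hausdorffDist (Xi i) (𝒳 θ) := h1
        _ = hausdorffDist (𝒳 θ) (Xi i) := hausdorffDist_comm
        _ ≤ d i := hH i θ hi
    refine ⟨φ p, ?_⟩
    show ψ (θ, φ p) ∈ Bstar
    have : ψ (θ, φ p) = (θ, p) := by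
      simp [hψ_def]
    rw [this]
    refine ⟨⟨hθ, hp⟩, ?_⟩
    show dist p (v (ι θ)) ≤ d (ι θ)
    rw [hιθ]
    exact hdist
  have hsel : ∀ θ ∈ Set.Icc (0:ℝ) 1,
      φ.symm (σ θ) ∈ 𝒳 θ ∧ dist (φ.symm (σ θ)) (v (ι θ)) ≤ d (ι θ) := by
    intro θ hθ
    have := hσsel θ (hne θ hθ)
    exact ⟨this.1.2, this.2⟩
  refine ⟨fun θ hθ => (hsel θ hθ).1, ?_⟩
  -- the integral bound
  haveI : IsFiniteMeasure μ01 := by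
    constructor
    rw [show μ01 = volume.restrict (Set.Icc 0 1) from rfl, Measure.restrict_apply_univ,
      Real.volume_Icc]
    exact ENNReal.ofReal_lt_top
  have hIcc_ae : ∀ᵐ θ ∂μ01, θ ∈ Set.Icc (0:ℝ) 1 := ae_restrict_mem measurableSet_Icc
  have hym : Measurable (fun θ => φ.symm (σ θ)) := φ.symm.continuous.measurable.comp hσm
  have hfmeas : Measurable (fun θ => ‖v (ι θ) - φ.symm (σ θ)‖ ^ 2) :=
    (((measurable_of_countable v).comp hιmeas).sub hym).norm.pow_const 2
  have hbound : ∀ᵐ θ ∂μ01, ‖v (ι θ) - φ.symm (σ θ)‖ ^ 2 ≤ D ^ 2 := by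
    filter_upwards [hIcc_ae] with θ hθ
    have h1 : ‖v (ι θ) - φ.symm (σ θ)‖ ≤ D := by
      rw [← dist_eq_norm, dist_comm]
      exact le_trans (hsel θ hθ).2 (hD (ι θ))
    exact pow_le_pow_left₀ (norm_nonneg _) h1 2
  have hint : Integrable (fun θ => ‖v (ι θ) - φ.symm (σ θ)‖ ^ 2) μ01 := by
    refine Integrable.mono' (integrable_const (D ^ 2)) hfmeas.aestronglyMeasurable ?_
    filter_upwards [hbound] with θ h
    rwa [Real.norm_eq_abs, abs_of_nonneg (by positivity)]
  calc (∫ θ, ‖v (ι θ) - φ.symm (σ θ)‖ ^ 2 ∂μ01) ≤ ∫ _, D ^ 2 ∂μ01 :=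
        integral_mono_ae hint (integrable_const _) hbound
    _ = (μ01 Set.univ).toReal • D ^ 2 := integral_const _
    _ = D ^ 2 := by
        rw [show μ01 = volume.restrict (Set.Icc 0 1) from rfl, Measure.restrict_apply_univ,
          Real.volume_Icc]
        norm_num
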